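/- Let X, Z ∈ ℝ^{d×r} satisfy ‖XXᵀ − ZZᵀ‖_F ≤ ρ·λ_min(ZᵀZ), ρ < 1/2, with XᵀX invertible. Then for any standard basis vector e_i: e_iᵀX(XᵀX)^{−2}XᵀZZᵀX(XᵀX)^{−1}Xᵀe_i ≥ ((1−2ρ)/(1−ρ))·e_iᵀX(XᵀX)^{−1}Xᵀe_i. -/

import Mathlib

open Matrix BigOperators

noncomputable section

/-- Frobenius norm of a real matrix. -/
def frob {m n : ℕ} (A : Matrix (Fin m) (Fin n) ℝ) : ℝ :=
  Real.sqrt (∑ i, ∑ j, (A i j) ^ 2)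

/-- Trace inner product `⟨A,B⟩ = tr(AᵀB)`. -/
def mip {m n : ℕ} (A B : Matrix (Fin m) (Fin n) ℝ) : ℝ := (Aᵀ * B).trace

open Classical in
/-- Smallest eigenvalue of a Hermitian matrix (junk value 0 otherwise). -/
def lammin {n : ℕ} (M : Matrix (Fin n) (Fin n) ℝ) : ℝ :=
  if h : M.IsHermitian then ⨅ i, h.eigenvalues i else 0

open scoped ComplexOrder in
/-- The positive semidefinite square root of a positive semidefinite matrix
(removed from Mathlib; restored with its old definition). -/
def Matrix.PosSemidef.sqrt {n : Type*} [Fintype n] [DecidableEq n] {𝕜 : Type*} [RCLike 𝕜]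
    {A : Matrix n n 𝕜} (hA : A.PosSemidef) : Matrix n n 𝕜 :=
  (hA.1.eigenvectorUnitary : Matrix n n 𝕜) * diagonal ((↑) ∘ (√·) ∘ hA.1.eigenvalues) *
    (star hA.1.eigenvectorUnitary : Matrix n n 𝕜)

/-- Local norm `‖V‖_X = ‖V (XᵀX)^{1/2}‖_F`. -/
def locNorm {d r : ℕ} (X V : Matrix (Fin d) (Fin r) ℝ) : ℝ :=
  frob (V * (Matrix.posSemidef_conjTranspose_mul_self X).sqrt)

/-- Dual local norm `‖V‖_X* = ‖V (XᵀX)^{-1/2}‖_F`. -/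
def dualNorm {d r : ℕ} (X V : Matrix (Fin d) (Fin r) ℝ) : ℝ :=
  frob (V * ((Matrix.posSemidef_conjTranspose_mul_self X).sqrt)⁻¹)

/-- Leverage score / coherence `g_k(X) = e_kᵀ X (XᵀX)⁻¹ Xᵀ e_k`. -/
def lev {d r : ℕ} (k : Fin d) (X : Matrix (Fin d) (Fin r) ℝ) : ℝ :=
  (X * (Xᴴ * X)⁻¹ * Xᴴ) k k

/-- Gradient of the leverage score `∇g_k(X)`. -/
def levGrad {d r : ℕ} (k : Fin d) (X : Matrix (Fin d) (Fin r) ℝ) :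
    Matrix (Fin d) (Fin r) ℝ :=
  (2 : ℝ) • ((1 - X * (Xᴴ * X)⁻¹ * Xᴴ) * Matrix.single k k (1 : ℝ) * X * (Xᴴ * X)⁻¹)

/-- Stochastic gradient sample `SG(X)` for the index pair `(i,j)`. -/
def SG {d r : ℕ} (X Z : Matrix (Fin d) (Fin r) ℝ) (i j : Fin d) :
    Matrix (Fin d) (Fin r) ℝ :=
  (2 * (d : ℝ) ^ 2 * ((X * Xᴴ - Z * Zᴴ) i j)) •
    ((Matrix.single i j (1 : ℝ) + Matrix.single j i (1 : ℝ)) * X)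

/-! ### Auxiliary lemmas -/

lemma quad_form_eig {n : ℕ} {M : Matrix (Fin n) (Fin n) ℝ} (hM : M.IsHermitian) (w : Fin n → ℝ)
    (k : ℕ) :
    w ⬝ᵥ ((M ^ k) *ᵥ w) =
      ∑ j, (hM.eigenvalues j)^k *
        (((star (hM.eigenvectorUnitary : Matrix (Fin n) (Fin n) ℝ)) *ᵥ w) j)^2 := by
  set U : Matrix (Fin n) (Fin n) ℝ := (hM.eigenvectorUnitary : Matrix (Fin n) (Fin n) ℝ) with hUdef
  have hU : U * star U = 1 := Matrix.mem_unitaryGroup_iff.mp hM.eigenvectorUnitary.2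
  have hU' : star U * U = 1 := Matrix.mem_unitaryGroup_iff'.mp hM.eigenvectorUnitary.2
  have hpow : M ^ k = U * (Matrix.diagonal (fun j => (hM.eigenvalues j)^k)) * star U := by
    induction k with
    | zero => simp [pow_zero, Matrix.diagonal_one, hU]
    | succ k ih =>
      have hspec : M = U * Matrix.diagonal hM.eigenvalues * star U := by
        have := hM.spectral_theorem
        simpa using this
      have step : M ^ (k+1) = (U * Matrix.diagonal (fun j => hM.eigenvalues j ^ k) * star U) *
          (U * Matrix.diagonal hM.eigenvalues * star U) := by
        rw [pow_succ]; exact congrArg₂ (· * ·) ih hspec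
      rw [step]
      rw [show U * Matrix.diagonal (fun j => hM.eigenvalues j ^ k) * star U *
            (U * Matrix.diagonal hM.eigenvalues * star U)
          = U * (Matrix.diagonal (fun j => hM.eigenvalues j ^ k) * (star U * U) *
              Matrix.diagonal hM.eigenvalues) * star U by simp only [Matrix.mul_assoc]]
      rw [hU', mul_one, Matrix.diagonal_mul_diagonal]
      simp [pow_succ]
  rw [hpow]
  rw [← Matrix.mulVec_mulVec, ← Matrix.mulVec_mulVec]
  rw [Matrix.dotProduct_mulVec]
  have hvm : w ᵥ* U = (star U) *ᵥ w := by
    ext j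
    simp [Matrix.vecMul, Matrix.mulVec, dotProduct, Matrix.star_apply, mul_comm]
  rw [hvm]
  simp [Matrix.mulVec_diagonal, dotProduct]
  ring_nf
  apply Finset.sum_congr rfl
  intro j _
  ring

lemma quad_one {n : ℕ} {M : Matrix (Fin n) (Fin n) ℝ} (hM : M.IsHermitian) (c : ℝ)
    (hc : ∀ j, c ≤ hM.eigenvalues j) (w : Fin n → ℝ) :
    c * (w ⬝ᵥ w) ≤ w ⬝ᵥ (M *ᵥ w) := by
  have h0 := quad_form_eig hM w 0
  have h1 := quad_form_eig hM w 1
  simp only [pow_zero, pow_one, Matrix.one_mulVec] at h0 h1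
  rw [h0, h1, Finset.mul_sum]
  apply Finset.sum_le_sum
  intro j _
  simp only [one_mul]
  exact mul_le_mul_of_nonneg_right (hc j) (sq_nonneg _)

lemma quad_two {n : ℕ} {M : Matrix (Fin n) (Fin n) ℝ} (hM : M.IsHermitian) (c : ℝ)
    (hc0 : 0 ≤ c) (hc : ∀ j, c ≤ hM.eigenvalues j) (w : Fin n → ℝ) :
    c * (w ⬝ᵥ (M *ᵥ w)) ≤ w ⬝ᵥ ((M * M) *ᵥ w) := by
  have h1 := quad_form_eig hM w 1
  have h2 := quad_form_eig hM w 2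
  simp only [pow_one] at h1
  rw [show M ^ 2 = M * M from sq M] at h2
  rw [h1, h2, Finset.mul_sum]
  apply Finset.sum_le_sum
  intro j _
  rw [← mul_assoc]
  apply mul_le_mul_of_nonneg_right _ (sq_nonneg _)
  rw [sq]
  exact mul_le_mul_of_nonneg_right (hc j) (hc0.trans (hc j))

lemma quad_three {n : ℕ} {M : Matrix (Fin n) (Fin n) ℝ} (hM : M.IsHermitian) (c : ℝ)
    (hc0 : 0 ≤ c) (hc : ∀ j, c ≤ hM.eigenvalues j) (w : Fin n → ℝ) :
    c ^ 2 * (w ⬝ᵥ (M *ᵥ w)) ≤ w ⬝ᵥ ((M * (M * M)) *ᵥ w) := by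
  have h1 := quad_form_eig hM w 1
  have h3 := quad_form_eig hM w 3
  simp only [pow_one] at h1
  rw [show M ^ 3 = M * (M * M) by rw [pow_succ, sq, mul_assoc]] at h3
  rw [h1, h3, Finset.mul_sum]
  apply Finset.sum_le_sum
  intro j _
  rw [← mul_assoc]
  apply mul_le_mul_of_nonneg_right _ (sq_nonneg _)
  have hj := hc j
  have hj0 : 0 ≤ hM.eigenvalues j := hc0.trans hj
  calc c ^ 2 * hM.eigenvalues j ≤ hM.eigenvalues j ^ 2 * hM.eigenvalues j := by
        apply mul_le_mul_of_nonneg_right _ hj0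
        exact pow_le_pow_left₀ hc0 hj 2
    _ = hM.eigenvalues j ^ 3 := by ring

lemma dotProduct_self_nonneg {n : ℕ} (a : Fin n → ℝ) : 0 ≤ a ⬝ᵥ a :=
  Finset.sum_nonneg fun _ _ => mul_self_nonneg _

lemma frob_nonneg {m n : ℕ} (A : Matrix (Fin m) (Fin n) ℝ) : 0 ≤ frob A := Real.sqrt_nonneg _

lemma frob_eq_zero {m n : ℕ} {A : Matrix (Fin m) (Fin n) ℝ} (h : frob A = 0) : A = 0 := by
  have hsum : (∑ i, ∑ j, (A i j) ^ 2) = 0 := by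
    have hnn : (0:ℝ) ≤ ∑ i, ∑ j, (A i j) ^ 2 :=
      Finset.sum_nonneg fun i _ => Finset.sum_nonneg fun j _ => sq_nonneg _
    by_contra hne
    have : 0 < ∑ i, ∑ j, (A i j) ^ 2 := lt_of_le_of_ne hnn (Ne.symm hne)
    have := Real.sqrt_pos.mpr this
    rw [frob] at h; linarith
  ext i j
  have h1 : ∀ i ∈ Finset.univ, (0:ℝ) ≤ ∑ j, (A i j)^2 :=
    fun i _ => Finset.sum_nonneg fun j _ => sq_nonneg _
  have h2 := (Finset.sum_eq_zero_iff_of_nonneg h1).mp hsum i (Finset.mem_univ i)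
  have h3 := (Finset.sum_eq_zero_iff_of_nonneg (fun j _ => sq_nonneg (A i j))).mp h2 j
    (Finset.mem_univ j)
  simpa using pow_eq_zero_iff (n := 2) (by norm_num) |>.mp h3

lemma cs_bound {d : ℕ} (E : Matrix (Fin d) (Fin d) ℝ) (a b : Fin d → ℝ) :
    |a ⬝ᵥ (E *ᵥ b)| ≤ frob E * (Real.sqrt (a ⬝ᵥ a) * Real.sqrt (b ⬝ᵥ b)) := by
  have key : a ⬝ᵥ (E *ᵥ b) = ∑ p : Fin d × Fin d, E p.1 p.2 * (a p.1 * b p.2) := by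
    rw [Fintype.sum_prod_type]
    simp only [dotProduct, Matrix.mulVec, dotProduct, Finset.mul_sum]
    apply Finset.sum_congr rfl; intro i _; apply Finset.sum_congr rfl; intro j _; ring
  have hcs := Finset.sum_mul_sq_le_sq_mul_sq Finset.univ
      (fun p : Fin d × Fin d => E p.1 p.2) (fun p => a p.1 * b p.2)
  have hE : (∑ p : Fin d × Fin d, (E p.1 p.2)^2) = ∑ i, ∑ j, (E i j)^2 :=
    Fintype.sum_prod_type _
  have hab : (∑ p : Fin d × Fin d, (a p.1 * b p.2)^2) = (a ⬝ᵥ a) * (b ⬝ᵥ b) := by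
    rw [Fintype.sum_prod_type]
    simp only [dotProduct, mul_pow, ← Finset.mul_sum, ← Finset.sum_mul]
    congr 1 <;> · apply Finset.sum_congr rfl; intro i _; ring
  rw [key]
  have h2 : (∑ p : Fin d × Fin d, E p.1 p.2 * (a p.1 * b p.2))^2
      ≤ (∑ i, ∑ j, (E i j)^2) * ((a ⬝ᵥ a) * (b ⬝ᵥ b)) := by
    calc _ ≤ (∑ p : Fin d × Fin d, (E p.1 p.2)^2) * (∑ p : Fin d × Fin d, (a p.1 * b p.2)^2) := hcs
      _ = _ := by rw [hE, hab]
  have habs : |∑ p : Fin d × Fin d, E p.1 p.2 * (a p.1 * b p.2)|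
      = Real.sqrt ((∑ p : Fin d × Fin d, E p.1 p.2 * (a p.1 * b p.2))^2) :=
    (Real.sqrt_sq_eq_abs _).symm
  rw [habs]
  calc Real.sqrt ((∑ p : Fin d × Fin d, E p.1 p.2 * (a p.1 * b p.2))^2)
      ≤ Real.sqrt ((∑ i, ∑ j, (E i j)^2) * ((a ⬝ᵥ a) * (b ⬝ᵥ b))) := Real.sqrt_le_sqrt h2
    _ = frob E * (Real.sqrt (a ⬝ᵥ a) * Real.sqrt (b ⬝ᵥ b)) := by
        rw [Real.sqrt_mul' _ (mul_nonneg (dotProduct_self_nonneg a) (dotProduct_self_nonneg b)),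
          Real.sqrt_mul (dotProduct_self_nonneg a)]
        rfl

lemma dp_move {a b : ℕ} (A : Matrix (Fin a) (Fin b) ℝ) (v : Fin a → ℝ) (w : Fin b → ℝ) :
    v ⬝ᵥ (A *ᵥ w) = (Aᴴ *ᵥ v) ⬝ᵥ w := by
  simp only [dotProduct, Matrix.mulVec, dotProduct, Matrix.conjTranspose_apply,
    star_trivial, Finset.mul_sum, Finset.sum_mul]
  rw [Finset.sum_comm]
  apply Finset.sum_congr rfl; intro j _; apply Finset.sum_congr rfl; intro i _; ring

lemma diag_entry_eq {d : ℕ} (N : Matrix (Fin d) (Fin d) ℝ) (i : Fin d) :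
    N i i = (Pi.single i 1) ⬝ᵥ (N *ᵥ (Pi.single i 1)) := by
  simp [dotProduct, Matrix.mulVec, Pi.single_apply]

lemma dp_pos {n : ℕ} {a : Fin n → ℝ} (h : a ≠ 0) : 0 < a ⬝ᵥ a := by
  rcases Function.ne_iff.mp h with ⟨i, hi⟩
  apply Finset.sum_pos' (fun j _ => mul_self_nonneg _)
  exact ⟨i, Finset.mem_univ i, mul_self_pos.mpr hi⟩

lemma basis_self_dot {n : ℕ} {M : Matrix (Fin n) (Fin n) ℝ} (hM : M.IsHermitian) (j : Fin n) :
    ⇑(hM.eigenvectorBasis j) ⬝ᵥ ⇑(hM.eigenvectorBasis j) = 1 := by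
  have h := hM.eigenvectorBasis.orthonormal.1 j
  have h2 : ‖hM.eigenvectorBasis j‖ ^ 2 = 1 := by rw [h]; norm_num
  rw [EuclideanSpace.norm_eq] at h2
  rw [Real.sq_sqrt (Finset.sum_nonneg fun i _ => sq_nonneg _)] at h2
  simp only [Real.norm_eq_abs, sq_abs] at h2
  rw [dotProduct]
  rw [← h2]
  apply Finset.sum_congr rfl
  intro i _
  rw [sq]

lemma exists_common_vec {d r : ℕ} (X Z : Matrix (Fin d) (Fin r) ℝ)
    (hrX : X.rank = r) (hrZ : Z.rank = r) (v₀ : Fin d → ℝ)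
    (hv₀ : Xᴴ *ᵥ v₀ ≠ 0) :
    ∃ (p : Fin d → ℝ) (w₀ : Fin r → ℝ) (k : Fin d → ℝ) (c : ℝ),
      p ≠ 0 ∧ p = Z *ᵥ w₀ ∧ Xᴴ *ᵥ k = 0 ∧ p = k + c • v₀ := by
  classical
  set S : Submodule ℝ (Fin d → ℝ) := LinearMap.range Z.mulVecLin with hS
  set K : Submodule ℝ (Fin d → ℝ) := LinearMap.ker (Xᴴ).mulVecLin with hK
  have hv₀0 : v₀ ≠ 0 := by
    intro hc; apply hv₀; rw [hc]; simp
  have hSdim : Module.finrank ℝ S = r := hrZ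
  have hKdim : Module.finrank ℝ K = d - r := by
    have h1 := LinearMap.finrank_range_add_finrank_ker (Xᴴ).mulVecLin
    have h2 : Module.finrank ℝ (LinearMap.range (Xᴴ).mulVecLin) = r := by
      have : (Xᴴ).rank = r := by rw [X.rank_conjTranspose, hrX]
      exact this
    rw [h2] at h1
    simp only [Module.finrank_fintype_fun_eq_card, Fintype.card_fin] at h1
    rw [← hK] at h1
    omega
  have hdisj : K ⊓ (ℝ ∙ v₀) = ⊥ := by
    rw [Submodule.eq_bot_iff]
    rintro x ⟨hxK, hxs⟩
    rcases Submodule.mem_span_singleton.mp hxs with ⟨c, rfl⟩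
    have : Xᴴ *ᵥ (c • v₀) = 0 := hxK
    rw [Matrix.mulVec_smul] at this
    rcases smul_eq_zero.mp this with hc | hc
    · rw [hc, zero_smul]
    · exact absurd hc hv₀
  have hWdim : Module.finrank ℝ ↥(K ⊔ (ℝ ∙ v₀)) = d - r + 1 := by
    have := Submodule.finrank_sup_add_finrank_inf_eq K (ℝ ∙ v₀)
    rw [hdisj, finrank_bot, hKdim, finrank_span_singleton hv₀0] at this
    omega
  have hinter : (K ⊔ (ℝ ∙ v₀)) ⊓ S ≠ ⊥ := by
    intro hbot
    have := Submodule.finrank_sup_add_finrank_inf_eq (K ⊔ (ℝ ∙ v₀)) S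
    rw [hbot, finrank_bot, hWdim, hSdim] at this
    have hle : Module.finrank ℝ ↥((K ⊔ (ℝ ∙ v₀)) ⊔ S) ≤ d := by
      simpa using Submodule.finrank_le ((K ⊔ (ℝ ∙ v₀)) ⊔ S)
    have hrd : r ≤ d := by
      have h3 : (Xᴴ).rank ≤ d := by simpa using Matrix.rank_le_card_width Xᴴ
      rw [X.rank_conjTranspose, hrX] at h3
      omega
    omega
  rcases (Submodule.ne_bot_iff _).mp hinter with ⟨p, ⟨hpW, hpS⟩, hp0⟩
  rcases LinearMap.mem_range.mp hpS with ⟨w₀, hw₀⟩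
  rcases Submodule.mem_sup.mp hpW with ⟨k, hk, y, hy, hky⟩
  rcases Submodule.mem_span_singleton.mp hy with ⟨c, rfl⟩
  exact ⟨p, w₀, k, c, hp0, hw₀.symm, hk, hky.symm⟩

/-- Diagonal lower bound used in the coherence-descent lemma. -/
theorem diagonal_lower_bound {d r : ℕ} (X Z : Matrix (Fin d) (Fin r) ℝ) (ρ : ℝ)
    (hρ : ρ < 1 / 2) (hX : IsUnit (Xᴴ * X).det)
    (h : frob (X * Xᴴ - Z * Zᴴ) ≤ ρ * lammin (Zᴴ * Z)) (i : Fin d) :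
    (X * ((Xᴴ * X)⁻¹ * (Xᴴ * X)⁻¹) * Xᴴ * (Z * Zᴴ) * (X * (Xᴴ * X)⁻¹ * Xᴴ)) i i
      ≥ (1 - 2 * ρ) / (1 - ρ) * (X * (Xᴴ * X)⁻¹ * Xᴴ) i i := by
  classical
  rcases Nat.eq_zero_or_pos r with hr0 | hrpos
  · subst hr0
    have hzero : ∀ (W : Matrix (Fin 0) (Fin 0) ℝ), X * W * Xᴴ = 0 := by
      intro W; ext a b; simp [Matrix.mul_apply]
    rw [ge_iff_le, hzero ((Xᴴ * X)⁻¹ * (Xᴴ * X)⁻¹), hzero (Xᴴ * X)⁻¹]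
    simp
  haveI : Nonempty (Fin r) := ⟨⟨0, hrpos⟩⟩
  obtain ⟨G, hG⟩ : ∃ G : Matrix (Fin r) (Fin r) ℝ, G = Xᴴ * X := ⟨_, rfl⟩
  rw [← hG] at hX ⊢
  have hGunit : IsUnit G := (Matrix.isUnit_iff_isUnit_det G).mpr hX
  have hGG : G * G⁻¹ = 1 := Matrix.mul_nonsing_inv G hX
  have hGh : G.IsHermitian := by rw [hG]; exact Matrix.isHermitian_conjTranspose_mul_self X
  have hGih : (G⁻¹).IsHermitian := hGh.inv
  have hZh : (Zᴴ * Z).IsHermitian := Matrix.isHermitian_conjTranspose_mul_self Z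
  obtain ⟨lam, hlamdef⟩ : ∃ l : ℝ, l = lammin (Zᴴ * Z) := ⟨_, rfl⟩
  rw [← hlamdef] at h
  have hlam_eq : lam = ⨅ j, hZh.eigenvalues j := by rw [hlamdef, lammin, dif_pos hZh]
  have hlam_le : ∀ j, lam ≤ hZh.eigenvalues j := fun j =>
    hlam_eq ▸ ciInf_le (Finite.bddBelow_range _) j
  obtain ⟨i₀, hi₀⟩ := Finite.exists_min hZh.eigenvalues
  have hlam_att : lam = hZh.eigenvalues i₀ :=
    le_antisymm (hlam_le i₀) (hlam_eq ▸ le_ciInf hi₀)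
  have hZpsd : (Zᴴ * Z).PosSemidef := Matrix.posSemidef_conjTranspose_mul_self Z
  have hlam_nonneg : 0 ≤ lam := hlam_att ▸ hZpsd.eigenvalues_nonneg i₀
  have hXrank : X.rank = r := by
    rw [← X.rank_conjTranspose_mul_self, ← hG,
      Matrix.rank_of_isUnit G hGunit, Fintype.card_fin]
  have hfrob_nonneg : 0 ≤ frob (X * Xᴴ - Z * Zᴴ) := frob_nonneg _
  -- lam is positive
  have hlam_pos : 0 < lam := by
    rcases hlam_nonneg.lt_or_eq with hpos | heq0
    · exact hpos
    exfalso
    have hfrob0 : frob (X * Xᴴ - Z * Zᴴ) = 0 := by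
      have : ρ * lam = 0 := by rw [← heq0, mul_zero]
      linarith [h, hfrob_nonneg]
    have hE0 : X * Xᴴ - Z * Zᴴ = 0 := frob_eq_zero hfrob0
    have hXZ : Z * Zᴴ = X * Xᴴ := (sub_eq_zero.mp hE0).symm
    have hZrank : Z.rank = r := by
      rw [← Z.rank_self_mul_conjTranspose, hXZ, X.rank_self_mul_conjTranspose, hXrank]
    have hZZrank : (Zᴴ * Z).rank = r := by rw [Z.rank_conjTranspose_mul_self, hZrank]
    have hsurj : Function.Surjective (Zᴴ * Z).mulVecLin := by
      rw [← LinearMap.range_eq_top]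
      apply Submodule.eq_top_of_finrank_eq
      rw [Module.finrank_fintype_fun_eq_card, Fintype.card_fin]; exact hZZrank
    have hinj := LinearMap.injective_iff_surjective.mpr hsurj
    have hq0eig : (Zᴴ * Z) *ᵥ ⇑(hZh.eigenvectorBasis i₀) = 0 := by
      rw [hZh.mulVec_eigenvectorBasis i₀, ← hlam_att, ← heq0, zero_smul]
    have : ⇑(hZh.eigenvectorBasis i₀) = (0 : Fin r → ℝ) := by
      apply hinj
      rw [Matrix.mulVecLin_apply, hq0eig, map_zero]
    have hdot := basis_self_dot hZh i₀
    rw [this] at hdot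
    simp [dotProduct] at hdot
  have hρ0 : 0 ≤ ρ := by
    by_contra hneg
    push_neg at hneg
    have : ρ * lam < 0 := mul_neg_of_neg_of_pos hneg hlam_pos
    linarith
  have hZrank : Z.rank = r := by
    have hdet : IsUnit (Zᴴ * Z).det := by
      rw [hZh.det_eq_prod_eigenvalues]
      have hp : (0:ℝ) < ∏ j, hZh.eigenvalues j :=
        Finset.prod_pos fun j _ => lt_of_lt_of_le hlam_pos (hlam_le j)
      simpa using isUnit_iff_ne_zero.mpr hp.ne'
    rw [← Z.rank_conjTranspose_mul_self,
      Matrix.rank_of_isUnit _ ((Matrix.isUnit_iff_isUnit_det _).mpr hdet), Fintype.card_fin]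
  -- smallest eigenvalue of G
  obtain ⟨i₁, hi₁⟩ := Finite.exists_min hGh.eigenvalues
  obtain ⟨μ, hμdef⟩ : ∃ m : ℝ, m = hGh.eigenvalues i₁ := ⟨_, rfl⟩
  have hμ_le : ∀ j, μ ≤ hGh.eigenvalues j := fun j => hμdef ▸ hi₁ j
  have hGpsd : G.PosSemidef := by rw [hG]; exact Matrix.posSemidef_conjTranspose_mul_self X
  have hμ_nonneg : 0 ≤ μ := hμdef ▸ hGpsd.eigenvalues_nonneg i₁
  have hμ_ne : μ ≠ 0 := by
    intro h0
    have hdetz : G.det = 0 := by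
      rw [hGh.det_eq_prod_eigenvalues]
      have : hGh.eigenvalues i₁ = 0 := by rw [← hμdef, h0]
      simpa using Finset.prod_eq_zero (Finset.mem_univ i₁) (by simp [this])
    rw [hdetz] at hX
    simpa using hX
  have hμ_pos : 0 < μ := lt_of_le_of_ne hμ_nonneg (Ne.symm hμ_ne)
  obtain ⟨q, hqdef⟩ : ∃ q : Fin r → ℝ, q = ⇑(hGh.eigenvectorBasis i₁) := ⟨_, rfl⟩
  have hq_eig : G *ᵥ q = μ • q := by rw [hqdef, hμdef]; exact hGh.mulVec_eigenvectorBasis i₁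
  have hq_dot : q ⬝ᵥ q = 1 := by rw [hqdef]; exact basis_self_dot hGh i₁
  obtain ⟨v₀, hv₀def⟩ : ∃ v₀ : Fin d → ℝ, v₀ = X *ᵥ q := ⟨_, rfl⟩
  have hXv₀ : Xᴴ *ᵥ v₀ = μ • q := by
    rw [hv₀def, Matrix.mulVec_mulVec, ← hG, hq_eig]
  have hv₀_ne : Xᴴ *ᵥ v₀ ≠ 0 := by
    rw [hXv₀]
    intro hc
    rcases smul_eq_zero.mp hc with hc | hc
    · exact hμ_ne hc
    · rw [hc] at hq_dot; simp [dotProduct] at hq_dot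
  obtain ⟨p, w₀, k, c, hp0, hpZ, hkker, hpkc⟩ := exists_common_vec X Z hXrank hZrank v₀ hv₀_ne
  obtain ⟨E, hEdef⟩ : ∃ E : Matrix (Fin d) (Fin d) ℝ, E = X * Xᴴ - Z * Zᴴ := ⟨_, rfl⟩
  rw [← hEdef] at h hfrob_nonneg
  have hZZE : Z * Zᴴ = X * Xᴴ - E := by rw [hEdef, sub_sub_cancel]
  -- Weyl-type bound : μ ≥ (1 - ρ) * lam
  have hXp : Xᴴ *ᵥ p = (c * μ) • q := by
    rw [hpkc, Matrix.mulVec_add, hkker, Matrix.mulVec_smul, hXv₀, zero_add, smul_smul]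
  have hpAp : p ⬝ᵥ ((X * Xᴴ) *ᵥ p) = (c * μ)^2 := by
    rw [← Matrix.mulVec_mulVec, dp_move X p (Xᴴ *ᵥ p), hXp]
    simp only [smul_dotProduct, dotProduct_smul, smul_eq_mul, hq_dot]
    ring
  have hkv₀ : k ⬝ᵥ v₀ = 0 := by
    rw [hv₀def, dp_move X k q, hkker, zero_dotProduct]
  have hv₀v₀ : v₀ ⬝ᵥ v₀ = μ := by
    nth_rewrite 2 [hv₀def]
    rw [dp_move X v₀ q, hXv₀]
    simp [smul_dotProduct, hq_dot]
  have hkv₀' : v₀ ⬝ᵥ k = 0 := by rw [dotProduct_comm]; exact hkv₀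
  have hpp : p ⬝ᵥ p = k ⬝ᵥ k + c^2 * μ := by
    simp only [hpkc, add_dotProduct, dotProduct_add, smul_dotProduct,
      dotProduct_smul, hkv₀, hkv₀', hv₀v₀, smul_eq_mul]
    ring
  have hA_le : p ⬝ᵥ ((X * Xᴴ) *ᵥ p) ≤ μ * (p ⬝ᵥ p) := by
    rw [hpAp, hpp]
    have hkk := dotProduct_self_nonneg k
    nlinarith [hμ_nonneg]
  have hZp : Zᴴ *ᵥ p = (Zᴴ * Z) *ᵥ w₀ := by rw [hpZ, Matrix.mulVec_mulVec]
  have hww : w₀ ⬝ᵥ ((Zᴴ * Z) *ᵥ w₀) = p ⬝ᵥ p := by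
    rw [dotProduct_comm, ← Matrix.mulVec_mulVec, ← dp_move Z (Z *ᵥ w₀) w₀, ← hpZ]
  have hpBp : p ⬝ᵥ ((Z * Zᴴ) *ᵥ p) = ((Zᴴ * Z) *ᵥ w₀) ⬝ᵥ ((Zᴴ * Z) *ᵥ w₀) := by
    rw [← Matrix.mulVec_mulVec, dp_move Z p (Zᴴ *ᵥ p), hZp]
  have hBp_ge : lam * (p ⬝ᵥ p) ≤ p ⬝ᵥ ((Z * Zᴴ) *ᵥ p) := by
    rw [hpBp]
    have h2 := quad_two hZh lam hlam_nonneg hlam_le w₀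
    have hrw : ((Zᴴ * Z) *ᵥ w₀) ⬝ᵥ ((Zᴴ * Z) *ᵥ w₀) = w₀ ⬝ᵥ (((Zᴴ * Z) * (Zᴴ * Z)) *ᵥ w₀) := by
      rw [dp_move (Zᴴ * Z) ((Zᴴ * Z) *ᵥ w₀) w₀, hZh.eq, Matrix.mulVec_mulVec,
        dotProduct_comm]
    rw [hrw, ← hww]
    exact h2
  have hEp : |p ⬝ᵥ (E *ᵥ p)| ≤ ρ * lam * (p ⬝ᵥ p) := by
    calc |p ⬝ᵥ (E *ᵥ p)| ≤ frob E * (Real.sqrt (p ⬝ᵥ p) * Real.sqrt (p ⬝ᵥ p)) := cs_bound E p p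
      _ = frob E * (p ⬝ᵥ p) := by rw [Real.mul_self_sqrt (dotProduct_self_nonneg p)]
      _ ≤ ρ * lam * (p ⬝ᵥ p) := mul_le_mul_of_nonneg_right h (dotProduct_self_nonneg p)
  have hsplitp : p ⬝ᵥ ((X * Xᴴ) *ᵥ p) = p ⬝ᵥ ((Z * Zᴴ) *ᵥ p) + p ⬝ᵥ (E *ᵥ p) := by
    have hXXE : X * Xᴴ = Z * Zᴴ + E := by rw [hEdef, add_sub_cancel]
    rw [hXXE, Matrix.add_mulVec, dotProduct_add]
  have hpp_pos : 0 < p ⬝ᵥ p := dp_pos hp0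
  have hμ_ge : (1 - ρ) * lam ≤ μ := by
    have habs := (abs_le.mp hEp).1
    have h1 : (1 - ρ) * lam * (p ⬝ᵥ p) ≤ μ * (p ⬝ᵥ p) := by
      have hexp : (1 - ρ) * lam * (p ⬝ᵥ p) = lam * (p ⬝ᵥ p) - ρ * lam * (p ⬝ᵥ p) := by ring
      rw [hexp]
      linarith [hsplitp, hA_le, hBp_ge]
    exact le_of_mul_le_mul_right h1 hpp_pos
  -- main computation
  obtain ⟨s, hsdef⟩ : ∃ s : Fin d → ℝ, s = (Pi.single i 1 : Fin d → ℝ) := ⟨_, rfl⟩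
  obtain ⟨u, hudef⟩ : ∃ u : Fin r → ℝ, u = G⁻¹ *ᵥ (Xᴴ *ᵥ s) := ⟨_, rfl⟩
  obtain ⟨v, hvdef⟩ : ∃ v : Fin d → ℝ, v = X *ᵥ u := ⟨_, rfl⟩
  obtain ⟨s₀, hs₀def⟩ : ∃ s₀ : Fin r → ℝ, s₀ = G⁻¹ *ᵥ u := ⟨_, rfl⟩
  obtain ⟨m, hmdef⟩ : ∃ m : Fin d → ℝ, m = X *ᵥ s₀ := ⟨_, rfl⟩
  have hGs₀ : G *ᵥ s₀ = u := by
    rw [hs₀def, Matrix.mulVec_mulVec, hGG, Matrix.one_mulVec]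
  have hGu : G *ᵥ u = Xᴴ *ᵥ s := by
    rw [hudef, Matrix.mulVec_mulVec, hGG, Matrix.one_mulVec]
  have hXv : Xᴴ *ᵥ v = Xᴴ *ᵥ s := by
    rw [hvdef, Matrix.mulVec_mulVec, ← hG, hGu]
  have hXm : Xᴴ *ᵥ m = u := by
    rw [hmdef, Matrix.mulVec_mulVec, ← hG, hGs₀]
  have hv_dot : v ⬝ᵥ v = (Xᴴ *ᵥ s) ⬝ᵥ u := by
    rw [hvdef, dp_move X (X *ᵥ u) u, Matrix.mulVec_mulVec, ← hG, hGu]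
  have hsv : s ⬝ᵥ v = (Xᴴ *ᵥ s) ⬝ᵥ u := by
    rw [hvdef, dp_move X s u]
  have hRHS : (X * G⁻¹ * Xᴴ) i i = v ⬝ᵥ v := by
    rw [diag_entry_eq (X * G⁻¹ * Xᴴ) i, ← hsdef]
    rw [← Matrix.mulVec_mulVec, ← Matrix.mulVec_mulVec, ← hudef, ← hvdef, hsv, hv_dot]
  have hPs : (X * G⁻¹ * Xᴴ) *ᵥ s = v := by
    rw [← Matrix.mulVec_mulVec, ← Matrix.mulVec_mulVec, ← hudef, ← hvdef]
  have hsym : (X * (G⁻¹ * G⁻¹) * Xᴴ)ᴴ = X * (G⁻¹ * G⁻¹) * Xᴴ := by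
    simp only [Matrix.conjTranspose_mul, Matrix.conjTranspose_conjTranspose, hGih.eq,
      Matrix.mul_assoc]
  have hms : (X * (G⁻¹ * G⁻¹) * Xᴴ) *ᵥ s = m := by
    rw [← Matrix.mulVec_mulVec, ← Matrix.mulVec_mulVec, ← Matrix.mulVec_mulVec, ← hudef,
      ← hs₀def, ← hmdef]
  have hLHS : (X * (G⁻¹ * G⁻¹) * Xᴴ * (Z * Zᴴ) * (X * G⁻¹ * Xᴴ)) i i
      = m ⬝ᵥ ((Z * Zᴴ) *ᵥ v) := by
    rw [diag_entry_eq (X * (G⁻¹ * G⁻¹) * Xᴴ * (Z * Zᴴ) * (X * G⁻¹ * Xᴴ)) i, ← hsdef]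
    rw [show (X * (G⁻¹ * G⁻¹) * Xᴴ * (Z * Zᴴ) * (X * G⁻¹ * Xᴴ)) *ᵥ s
        = (X * (G⁻¹ * G⁻¹) * Xᴴ) *ᵥ ((Z * Zᴴ) *ᵥ ((X * G⁻¹ * Xᴴ) *ᵥ s)) by
      rw [Matrix.mulVec_mulVec, Matrix.mulVec_mulVec]]
    rw [hPs, dp_move (X * (G⁻¹ * G⁻¹) * Xᴴ) s ((Z * Zᴴ) *ᵥ v), hsym, hms]
  have hsplit : m ⬝ᵥ ((Z * Zᴴ) *ᵥ v) = v ⬝ᵥ v - m ⬝ᵥ (E *ᵥ v) := by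
    rw [hZZE, Matrix.sub_mulVec, dotProduct_sub]
    congr 1
    rw [← Matrix.mulVec_mulVec, dp_move X m (Xᴴ *ᵥ v), hXm, hXv, hv_dot]
    exact dotProduct_comm _ _
  have hm_eq : m ⬝ᵥ m = s₀ ⬝ᵥ (G *ᵥ s₀) := by
    rw [hmdef, dp_move X (X *ᵥ s₀) s₀, Matrix.mulVec_mulVec, ← hG]
    exact dotProduct_comm _ _
  have hv_eq3 : v ⬝ᵥ v = s₀ ⬝ᵥ ((G * (G * G)) *ᵥ s₀) := by
    have h1 : v ⬝ᵥ v = u ⬝ᵥ (G *ᵥ u) := by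
      rw [hv_dot, ← hGu]
      exact dotProduct_comm _ _
    rw [h1, ← hGs₀, Matrix.mulVec_mulVec]
    rw [show (G *ᵥ s₀) ⬝ᵥ ((G * G) *ᵥ s₀) = ((G * G)ᴴ *ᵥ (G *ᵥ s₀)) ⬝ᵥ s₀ from
      dp_move (G * G) (G *ᵥ s₀) s₀]
    have hGGh : (G * G)ᴴ = G * G := by rw [Matrix.conjTranspose_mul, hGh.eq]
    rw [hGGh, Matrix.mulVec_mulVec, dotProduct_comm, Matrix.mul_assoc]
  have hμm : μ^2 * (m ⬝ᵥ m) ≤ v ⬝ᵥ v := by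
    rw [hm_eq, hv_eq3]
    exact quad_three hGh μ hμ_nonneg hμ_le s₀
  have h1ρ : 0 < 1 - ρ := by linarith
  have hEmv : m ⬝ᵥ (E *ᵥ v) ≤ ρ / (1 - ρ) * (v ⬝ᵥ v) := by
    have hmm_le : m ⬝ᵥ m ≤ (v ⬝ᵥ v) / μ^2 := by
      rw [le_div_iff₀ (by positivity)]
      linarith [hμm]
    have hsm : Real.sqrt (m ⬝ᵥ m) ≤ Real.sqrt (v ⬝ᵥ v) / μ := by
      have h2 := Real.sqrt_le_sqrt hmm_le
      rwa [Real.sqrt_div (dotProduct_self_nonneg v), Real.sqrt_sq hμ_nonneg] at h2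
    calc m ⬝ᵥ (E *ᵥ v) ≤ |m ⬝ᵥ (E *ᵥ v)| := le_abs_self _
      _ ≤ frob E * (Real.sqrt (m ⬝ᵥ m) * Real.sqrt (v ⬝ᵥ v)) := cs_bound E m v
      _ ≤ (ρ * lam) * ((Real.sqrt (v ⬝ᵥ v) / μ) * Real.sqrt (v ⬝ᵥ v)) := by
          apply mul_le_mul h (mul_le_mul_of_nonneg_right hsm (Real.sqrt_nonneg _))
            (by positivity) (mul_nonneg hρ0 hlam_nonneg)
      _ = ρ * lam * (v ⬝ᵥ v) / μ := by
          rw [div_mul_eq_mul_div, Real.mul_self_sqrt (dotProduct_self_nonneg v), mul_div_assoc]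
      _ ≤ ρ * lam * (v ⬝ᵥ v) / ((1 - ρ) * lam) := by
          apply div_le_div_of_nonneg_left
            (mul_nonneg (mul_nonneg hρ0 hlam_nonneg) (dotProduct_self_nonneg v))
            (mul_pos h1ρ hlam_pos) hμ_ge
      _ = ρ / (1 - ρ) * (v ⬝ᵥ v) := by
          field_simp
  rw [ge_iff_le, hLHS, hRHS, hsplit]
  have hco : (1 - 2*ρ)/(1-ρ) * (v ⬝ᵥ v) = v ⬝ᵥ v - ρ/(1-ρ) * (v ⬝ᵥ v) := by
    field_simp
    ring
  rw [hco]
  linarith [hEmv]
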